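/- arXiv:2202.09329 — 3 statements merged into one kernel-verified Lean document; each statement's English description precedes it below -/
import Mathlib

section
/- Let K be a field and let F ∈ K[x]^{m×n} be partitioned columnwise as F = [F₁ | F₂] with F₁ ∈ K[x]^{m×n₁}. Let K₁ ∈ K[x]^{ℓ₁×m} be a basis of Ker(F₁) and let F' = K₁·F₂. Then the column rank profile of F is the concatenation of the column rank profile (j₁,…,j_{r₁}) of F₁ with the tuple (n₁ + j'₁, …, n₁ + j'_{r₂}), where (j'₁,…,j'_{r₂}) is the column rank profile of F'. -/
open Polynomial Matrix

noncomputable section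

variable {K : Type*} [Field K]

/-- Degree of a univariate polynomial, viewed in `ℤ ∪ {⊥}`. -/
def pdegZ (p : K[X]) : WithBot ℤ := p.degree.map (Nat.cast : ℕ → ℤ)

/-- Shifted degree (`s`-degree) of a row vector. -/
def sdeg {n : ℕ} (s : Fin n → ℤ) (p : Fin n → K[X]) : WithBot ℤ :=
  Finset.univ.sup fun j => pdegZ (p j) + (s j : WithBot ℤ)

/-- `s`-leading matrix of `P`. -/
def leadMat {m n : ℕ} (s : Fin n → ℤ) (P : Matrix (Fin m) (Fin n) K[X]) :
    Matrix (Fin m) (Fin n) K :=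
  Matrix.of fun i j =>
    if pdegZ (P i j) + (s j : WithBot ℤ) = sdeg s (P i) then (P i j).leadingCoeff else 0

/-- `P` is `s`-reduced: its `s`-leading matrix has full row rank. -/
def IsShiftReduced {m n : ℕ} (s : Fin n → ℤ) (P : Matrix (Fin m) (Fin n) K[X]) : Prop :=
  (leadMat s P).rank = m

/-- `j` is the `s`-pivot index of the row `p`: the largest index where the `s`-degree is attained. -/
def IsPivotIndex {n : ℕ} (s : Fin n → ℤ) (p : Fin n → K[X]) (j : Fin n) : Prop :=
  pdegZ (p j) + (s j : WithBot ℤ) = sdeg s p ∧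
  ∀ j', j < j' → pdegZ (p j') + (s j' : WithBot ℤ) ≠ sdeg s p

/-- `P` is in `s`-weak Popov form: no zero row and strictly increasing `s`-pivot indices. -/
def IsWeakPopov {m n : ℕ} (s : Fin n → ℤ) (P : Matrix (Fin m) (Fin n) K[X]) : Prop :=
  (∀ i, P i ≠ 0) ∧ ∃ piv : Fin m → Fin n, StrictMono piv ∧ ∀ i, IsPivotIndex s (P i) (piv i)

/-- The rows of `Kb` form a basis of the left kernel of `F`. -/
def IsKernelBasis {ℓ m : ℕ} {β : Type*} [Fintype β]
    (Kb : Matrix (Fin ℓ) (Fin m) K[X]) (F : Matrix (Fin m) β K[X]) : Prop :=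
  (∀ i, Kb i ᵥ* F = 0) ∧
  LinearIndependent K[X] (fun i : Fin ℓ => Kb i) ∧
  ∀ p : Fin m → K[X], p ᵥ* F = 0 → ∃ u : Fin ℓ → K[X], p = u ᵥ* Kb

/-- Membership in the relation module `Rel_M(F)`. -/
def InRelModule {m n : ℕ} (M : Matrix (Fin n) (Fin n) K[X])
    (F : Matrix (Fin m) (Fin n) K[X]) (p : Fin m → K[X]) : Prop :=
  ∃ q : Fin n → K[X], p ᵥ* F = q ᵥ* M

/-- The rows of `A` form a basis of the relation module `Rel_M(F)`. -/
def IsRelationBasis {ℓ m n : ℕ} (M : Matrix (Fin n) (Fin n) K[X])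
    (A : Matrix (Fin ℓ) (Fin m) K[X]) (F : Matrix (Fin m) (Fin n) K[X]) : Prop :=
  (∀ i, InRelModule M F (A i)) ∧
  LinearIndependent K[X] (fun i : Fin ℓ => A i) ∧
  ∀ p : Fin m → K[X], InRelModule M F p → ∃ u : Fin ℓ → K[X], p = u ᵥ* A

/-- Rank of a polynomial matrix: its rank over the fraction field `K(x)`. -/
def polyRank {α β : Type*} [Fintype β] (F : Matrix α β K[X]) : ℕ :=
  (F.map (algebraMap K[X] (RatFunc K))).rank

/-- Lexicographic comparison of tuples. -/
def lexLE {r n : ℕ} (a b : Fin r → Fin n) : Prop :=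
  ∀ i, (∀ k, k < i → a k = b k) → a i ≤ b i

/-- `j` lists the column rank profile of `F`: the lexicographically smallest strictly
increasing tuple of `rank F` column indices selecting columns of full rank. -/
def IsColRankProfile {α : Type*} {n r : ℕ} (F : Matrix α (Fin n) K[X])
    (j : Fin r → Fin n) : Prop :=
  StrictMono j ∧ polyRank F = r ∧ polyRank (F.submatrix id j) = r ∧
  ∀ j' : Fin r → Fin n, StrictMono j' → polyRank (F.submatrix id j') = r → lexLE j j'


namespace CRPaux


open Set Submodule Module

variable {L : Type*} [Field L]

lemma vecMul_eq_sum' {R : Type*} [CommSemiring R] {m : ℕ} {κ : Type*} [Fintype κ]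
    (M : Matrix (Fin m) κ R) (p : Fin m → R) :
    p ᵥ* M = ∑ i, p i • M i := by
  ext j
  simp [Matrix.vecMul, dotProduct, Finset.sum_apply]

lemma rank_add_ker {α κ : Type*} [Fintype κ] (M : Matrix α κ L) :
    M.rank + finrank L (LinearMap.ker M.mulVecLin) = Fintype.card κ := by
  have h := LinearMap.finrank_range_add_finrank_ker M.mulVecLin
  rw [Module.finrank_pi] at h
  rw [Matrix.rank]
  exact h

lemma mulVec_ker_triv {m : ℕ} {κ : Type*} [Fintype κ] (M : Matrix (Fin m) κ L)
    (h : M.rank = Fintype.card κ) : ∀ v, M *ᵥ v = 0 → v = 0 := by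
  have h2 := rank_add_ker M
  rw [h] at h2
  have h3 : finrank L (LinearMap.ker M.mulVecLin) = 0 := by omega
  rw [Submodule.finrank_eq_zero] at h3
  intro v hv
  have hm : v ∈ LinearMap.ker M.mulVecLin := by
    simpa [LinearMap.mem_ker, Matrix.mulVecLin_apply] using hv
  rw [h3] at hm
  simpa using hm

lemma rank_eq_card_of_ker {m : ℕ} {κ : Type*} [Fintype κ] (M : Matrix (Fin m) κ L)
    (h : ∀ v, M *ᵥ v = 0 → v = 0) : M.rank = Fintype.card κ := by
  have hker : LinearMap.ker M.mulVecLin = ⊥ :=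
    LinearMap.ker_eq_bot'.2 (fun v hv => h v (by simpa [Matrix.mulVecLin_apply] using hv))
  have h2 := rank_add_ker M
  rw [hker, finrank_bot] at h2
  omega

lemma rank_add_lker {m : ℕ} {κ : Type*} [Fintype κ] (M : Matrix (Fin m) κ L) :
    M.rank + finrank L (LinearMap.ker M.vecMulLinear) = m := by
  have h := rank_add_ker Mᵀ
  rw [Matrix.rank_transpose, Matrix.mulVecLin_transpose, Fintype.card_fin] at h
  exact h

lemma rank_sub_mono {m n : ℕ} (A : Matrix (Fin m) (Fin n) L) {ι κ : Type*} [Fintype ι] [Fintype κ]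
    {f : ι → Fin n} {g : κ → Fin n} (h : Set.range f ⊆ Set.range g) :
    (A.submatrix id f).rank ≤ (A.submatrix id g).rank := by
  rw [Matrix.rank_eq_finrank_span_cols, Matrix.rank_eq_finrank_span_cols]
  apply Submodule.finrank_mono
  apply Submodule.span_mono
  rw [show Set.range (A.submatrix id f).col = Aᵀ '' Set.range f from Set.range_comp (fun k => Aᵀ k) f,
    show Set.range (A.submatrix id g).col = Aᵀ '' Set.range g from Set.range_comp (fun k => Aᵀ k) g]
  exact Set.image_mono h

lemma rank_sub_congr {m n : ℕ} (A : Matrix (Fin m) (Fin n) L) {ι κ : Type*} [Fintype ι] [Fintype κ]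
    {f : ι → Fin n} {g : κ → Fin n} (h : Set.range f = Set.range g) :
    (A.submatrix id f).rank = (A.submatrix id g).rank :=
  le_antisymm (rank_sub_mono A h.le) (rank_sub_mono A h.ge)


lemma rank_comp_of_full {m : ℕ} {κ ι : Type*} [Fintype κ] [Fintype ι] [DecidableEq κ]
    (M : Matrix (Fin m) κ L) (h : M.rank = Fintype.card κ) (e : ι → κ)
    (he : Function.Injective e) : (M.submatrix id e).rank = Fintype.card ι := by
  classical
  apply rank_eq_card_of_ker
  intro v hv
  set w : κ → L := fun k => if hk : ∃ i, e i = k then v hk.choose else 0 with hw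
  have hwe : ∀ i, w (e i) = v i := by
    intro i
    have hk : ∃ i', e i' = e i := ⟨i, rfl⟩
    rw [hw]
    simp only [dif_pos hk]
    exact congrArg v (he hk.choose_spec)
  have hMw : M *ᵥ w = 0 := by
    funext i0
    have : ∑ k ∈ Finset.univ.image e, M i0 k * w k = ∑ k : κ, M i0 k * w k := by
      apply Finset.sum_subset (Finset.subset_univ _)
      intro k _ hk
      have : w k = 0 := by
        rw [hw]; apply dif_neg
        rintro ⟨i, rfl⟩
        exact hk (Finset.mem_image_of_mem e (Finset.mem_univ i))
      rw [this, mul_zero]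
    have h2 : ∑ k ∈ Finset.univ.image e, M i0 k * w k = ∑ i : ι, M i0 (e i) * w (e i) :=
      Finset.sum_image (fun a _ b _ hab => he hab)
    have h3 : (M *ᵥ w) i0 = ∑ k : κ, M i0 k * w k := rfl
    rw [h3, ← this, h2]
    have h4 : ((M.submatrix id e) *ᵥ v) i0 = ∑ i : ι, M i0 (e i) * v i := rfl
    have := congrFun hv i0
    rw [h4] at this
    simpa [hwe] using this
  have : w = 0 := mulVec_ker_triv M h w hMw
  funext i
  have := congrFun this (e i)
  rw [hwe] at this
  simpa using this

lemma rank_pair {m ℓ N : ℕ} {ι κ : Type*} [Fintype ι] [Fintype κ]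
    (A : Matrix (Fin m) (Fin N) L) (f : ι → Fin N) (g : κ → Fin N)
    (C : Matrix (Fin ℓ) (Fin m) L)
    (hCA : C * A.submatrix id f = 0)
    (hinj : ∀ u : Fin ℓ → L, u ᵥ* C = 0 → u = 0)
    (hspan : ∀ p : Fin m → L, p ᵥ* A.submatrix id f = 0 → ∃ u, p = u ᵥ* C) :
    (A.submatrix id (Sum.elim f g)).rank
      = (A.submatrix id f).rank + (C * A.submatrix id g).rank := by
  classical
  set W := A.submatrix id (Sum.elim f g) with hWdef
  set B := A.submatrix id g with hBdef
  have hWf : ∀ p : Fin m → L, p ᵥ* W = 0 ↔ (p ᵥ* A.submatrix id f = 0 ∧ p ᵥ* B = 0) := by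
    intro p
    constructor
    · intro hp
      constructor
      · funext j
        have := congrFun hp (Sum.inl j)
        simpa [hWdef, Matrix.vecMul, dotProduct] using this
      · funext j
        have := congrFun hp (Sum.inr j)
        simpa [hWdef, hBdef, Matrix.vecMul, dotProduct] using this
    · rintro ⟨h1, h2⟩
      funext j
      cases j with
      | inl j =>
        have := congrFun h1 j
        simpa [hWdef, Matrix.vecMul, dotProduct] using this
      | inr j =>
        have := congrFun h2 j
        simpa [hWdef, hBdef, Matrix.vecMul, dotProduct] using this
  have hCinj : Function.Injective C.vecMulLinear := by
    rw [← LinearMap.ker_eq_bot]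
    exact LinearMap.ker_eq_bot'.2 (fun u hu => hinj u (by simpa using hu))
  have hker : LinearMap.ker W.vecMulLinear
      = Submodule.map C.vecMulLinear (LinearMap.ker (C * B).vecMulLinear) := by
    ext p
    simp only [LinearMap.mem_ker, Submodule.mem_map, Matrix.vecMulLinear_apply]
    constructor
    · intro hp
      obtain ⟨hpf, hpB⟩ := (hWf p).1 hp
      obtain ⟨u, hu⟩ := hspan p hpf
      refine ⟨u, ?_, hu.symm⟩
      rw [← Matrix.vecMul_vecMul, ← hu]
      exact hpB
    · rintro ⟨u, hu, rfl⟩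
      apply (hWf _).2
      constructor
      · rw [Matrix.vecMul_vecMul, hCA, Matrix.vecMul_zero]
      · rw [Matrix.vecMul_vecMul]
        exact hu
  have h1 : finrank L (LinearMap.ker W.vecMulLinear)
      = finrank L (LinearMap.ker (C * B).vecMulLinear) := by
    rw [hker]
    exact ((Submodule.equivMapOfInjective _ hCinj _).finrank_eq).symm
  have hrange : LinearMap.ker (A.submatrix id f).vecMulLinear = LinearMap.range C.vecMulLinear := by
    ext p
    simp only [LinearMap.mem_ker, LinearMap.mem_range, Matrix.vecMulLinear_apply]
    constructor
    · intro hp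
      obtain ⟨u, hu⟩ := hspan p hp
      exact ⟨u, hu.symm⟩
    · rintro ⟨u, rfl⟩
      rw [Matrix.vecMul_vecMul, hCA, Matrix.vecMul_zero]
  have hC0 : finrank L (LinearMap.range C.vecMulLinear) = ℓ := by
    have h := LinearMap.finrank_range_add_finrank_ker C.vecMulLinear
    rw [LinearMap.ker_eq_bot.2 hCinj, finrank_bot, Module.finrank_pi, Fintype.card_fin] at h
    omega
  have e1 := rank_add_lker W
  have e2 := rank_add_lker (A.submatrix id f)
  have e3 := rank_add_lker (C * B)
  rw [hrange, hC0] at e2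
  rw [h1] at e1
  omega

lemma strictMono_filter_le {n r : ℕ} {j : Fin r → Fin n} (hj : StrictMono j) (c : Fin n)
    (k : Fin r) :
    j k ≤ c ↔ k.val < (Finset.univ.filter (fun k => j k ≤ c)).card := by
  classical
  set F := Finset.univ.filter (fun k => j k ≤ c) with hF
  have hdc : ∀ a b : Fin r, a ≤ b → b ∈ F → a ∈ F := by
    intro a b hab hb
    simp only [hF, Finset.mem_filter, Finset.mem_univ, true_and] at hb ⊢
    exact le_trans (hj.monotone hab) hb
  constructor
  · intro hk
    have hsub : Finset.Iic k ⊆ F := fun a ha =>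
      hdc a k (Finset.mem_Iic.1 ha) (by simp [hF, hk])
    have h := Finset.card_le_card hsub
    rw [Fin.card_Iic] at h
    omega
  · intro hk
    by_contra hnot
    have hsub : F ⊆ Finset.Iio k := by
      intro a ha
      rw [Finset.mem_Iio]
      by_contra hka
      have := hdc k a (le_of_not_gt hka) ha
      simp only [hF, Finset.mem_filter, Finset.mem_univ, true_and] at this
      exact hnot this
    have h := Finset.card_le_card hsub
    rw [Fin.card_Iio] at h
    omega



lemma crp_prefix_le {m n r : ℕ} (A : Matrix (Fin m) (Fin n) L) (j : Fin r → Fin n)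
    (hmono : StrictMono j) (hr : A.rank = r) (hsub : (A.submatrix id j).rank = r)
    (hlex : ∀ j' : Fin r → Fin n, StrictMono j' → (A.submatrix id j').rank = r → lexLE j j')
    (c : Fin n) :
    (A.submatrix id (fun d : {d : Fin n // d ≤ c} => d.1)).rank
      ≤ (Finset.univ.filter (fun k => j k ≤ c)).card := by
  classical
  set s := (Finset.univ.filter (fun k => j k ≤ c)).card with hs
  have hjc : ∀ k : Fin r, j k ≤ c ↔ k.val < s := fun k => strictMono_filter_le hmono c k
  have hsr' : s ≤ r := le_trans (Finset.card_filter_le _ _) (by simp)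
  by_contra hcon
  push_neg at hcon
  have hprefix_le_r : (A.submatrix id (fun d : {d : Fin n // d ≤ c} => d.1)).rank ≤ r := by
    have h := rank_sub_mono A (f := fun d : {d : Fin n // d ≤ c} => d.1) (g := id)
      (by intro x _; exact ⟨x, rfl⟩)
    rw [Matrix.submatrix_id_id, hr] at h
    exact h
  have hsr : s < r := by omega
  set colsp := Submodule.span L (Set.range Aᵀ) with hcolsp_def
  have hcolsp : finrank L colsp = r := by
    rw [hcolsp_def]; exact (Matrix.rank_eq_finrank_span_cols A).symm.trans hr
  set spj := Submodule.span L (Set.range (Aᵀ ∘ j)) with hspj_def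
  have hspj_le : spj ≤ colsp := Submodule.span_mono (by rintro _ ⟨k, rfl⟩; exact ⟨j k, rfl⟩)
  have hspj_rank : finrank L spj = r := by
    rw [hspj_def]; exact (Matrix.rank_eq_finrank_span_cols (A.submatrix id j)).symm.trans hsub
  have hspj : spj = colsp := Submodule.eq_of_le_of_finrank_le hspj_le (by omega)
  set g0 : Fin s → Fin n := fun k => j (Fin.castLE hsr' k) with hg0
  set W := Submodule.span L (Set.range (Aᵀ ∘ g0)) with hW
  have hWle : finrank L W ≤ s := by
    refine le_trans (finrank_span_le_card _) ?_
    rw [Set.toFinset_range]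
    exact le_trans (Finset.card_image_le) (by simp)
  have hgenW : ∀ k : Fin r, k.val < s → Aᵀ (j k) ∈ W := by
    intro k hk
    apply Submodule.subset_span
    refine ⟨⟨k.val, hk⟩, ?_⟩
    show Aᵀ (g0 ⟨k.val, hk⟩) = Aᵀ (j k)
    have hcast : Fin.castLE hsr' ⟨k.val, hk⟩ = k := Fin.ext rfl
    rw [hg0]
    simp only [hcast]
  have hex : ∃ c' : Fin n, c' ≤ c ∧ Aᵀ c' ∉ W := by
    by_contra hall
    push_neg at hall
    have h : (A.submatrix id (fun d : {d : Fin n // d ≤ c} => d.1)).rank ≤ finrank L W := by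
      rw [Matrix.rank_eq_finrank_span_cols]
      apply Submodule.finrank_mono
      apply Submodule.span_le.2
      rintro _ ⟨d, rfl⟩
      exact hall d.1 d.2
    omega
  obtain ⟨c', hc'le, hc'W⟩ := hex
  have hc'mem : Aᵀ c' ∈ Submodule.span L (Set.range (fun k => Aᵀ (j k))) := by
    have : Aᵀ c' ∈ spj := by
      rw [hspj]
      exact Submodule.subset_span ⟨c', rfl⟩
    exact this
  obtain ⟨a, ha⟩ := (mem_span_range_iff_exists_fun L).1 hc'mem
  have hext : ∃ t : Fin r, s ≤ t.val ∧ a t ≠ 0 := by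
    by_contra hno
    push_neg at hno
    apply hc'W
    rw [← ha]
    apply Submodule.sum_mem
    intro k _
    by_cases hks : k.val < s
    · exact Submodule.smul_mem _ _ (hgenW k hks)
    · rw [hno k (le_of_not_gt hks), zero_smul]
      exact Submodule.zero_mem _
  obtain ⟨t, hts, hat⟩ := hext
  have hc'img : ∀ k : Fin r, c' ≠ j k := by
    intro k hk
    have hkc : j k ≤ c := hk ▸ hc'le
    have hks : k.val < s := (hjc k).1 hkc
    exact hc'W (hk ▸ hgenW k hks)
  set D : Finset (Fin n) := insert c' ((Finset.univ.image j).erase (j t)) with hD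
  have hc'notin : c' ∉ (Finset.univ.image j).erase (j t) := by
    intro h
    obtain ⟨k, _, hk⟩ := Finset.mem_image.1 (Finset.mem_of_mem_erase h)
    exact hc'img k hk.symm
  have hrpos : 0 < r := lt_of_le_of_lt (Nat.zero_le s) hsr
  have himgcard : (Finset.univ.image j).card = r := by
    rw [Finset.card_image_of_injective _ hmono.injective, Finset.card_univ, Fintype.card_fin]
  have hcardD : D.card = r := by
    rw [hD, Finset.card_insert_of_notMem hc'notin,
      Finset.card_erase_of_mem (Finset.mem_image_of_mem j (Finset.mem_univ t)), himgcard]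
    omega
  have hjD : ∀ k : Fin r, k ≠ t → j k ∈ D := by
    intro k hk
    exact Finset.mem_insert_of_mem (Finset.mem_erase.2
      ⟨fun h => hk (hmono.injective h), Finset.mem_image_of_mem j (Finset.mem_univ k)⟩)
  have hc'D : c' ∈ D := Finset.mem_insert_self _ _
  have hDspan : Submodule.span L (Aᵀ '' ↑D) = colsp := by
    apply le_antisymm
    · apply Submodule.span_le.2
      rintro _ ⟨d, _, rfl⟩
      exact Submodule.subset_span ⟨d, rfl⟩
    · rw [← hspj]
      apply Submodule.span_le.2
      rintro _ ⟨k, rfl⟩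
      show Aᵀ (j k) ∈ Submodule.span L (Aᵀ '' ↑D)
      by_cases hk : k = t
      · subst hk
        have hsum : a k • Aᵀ (j k)
            = Aᵀ c' - ∑ k' ∈ Finset.univ.erase k, a k' • Aᵀ (j k') := by
          rw [← ha, ← Finset.add_sum_erase _ _ (Finset.mem_univ k)]
          abel
        have hmem : Aᵀ c' - ∑ k' ∈ Finset.univ.erase k, a k' • Aᵀ (j k')
            ∈ Submodule.span L (Aᵀ '' ↑D) := by
          apply Submodule.sub_mem
          · exact Submodule.subset_span ⟨c', Finset.mem_coe.2 hc'D, rfl⟩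
          · apply Submodule.sum_mem
            intro k' hk'
            exact Submodule.smul_mem _ _ (Submodule.subset_span
              ⟨j k', Finset.mem_coe.2 (hjD k' (Finset.ne_of_mem_erase hk')), rfl⟩)
        have heq : Aᵀ (j k) = (a k)⁻¹ • (a k • Aᵀ (j k)) := by
          rw [smul_smul, inv_mul_cancel₀ hat, one_smul]
        rw [heq, hsum]
        exact Submodule.smul_mem _ _ hmem
      · exact Submodule.subset_span ⟨j k, Finset.mem_coe.2 (hjD k hk), rfl⟩
  set j'' : Fin r → Fin n := fun k => D.orderEmbOfFin hcardD k with hj''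
  have hj''mono : StrictMono j'' := (D.orderEmbOfFin hcardD).strictMono
  have hrange : Set.range j'' = ↑D := D.range_orderEmbOfFin hcardD
  have hrank'' : (A.submatrix id j'').rank = r := by
    rw [Matrix.rank_eq_finrank_span_cols,
      show Set.range (A.submatrix id j'').col = Aᵀ '' Set.range j'' from Set.range_comp (fun k => Aᵀ k) j'', hrange, hDspan, hcolsp]
  have hL := hlex j'' hj''mono hrank''
  have hjD' : ∀ k : Fin r, k.val < s → j k ∈ D := by
    intro k hk
    apply hjD
    intro h
    rw [h] at hk
    omega
  have hbeta : j'' ⟨s, hsr⟩ ≤ c := by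
    by_contra hb
    push_neg at hb
    set E := D.filter (· ≤ c) with hE
    have hcard1 : s + 1 ≤ E.card := by
      have h := Finset.card_le_card_of_injOn
        (f := fun kk : Fin (s + 1) => if h : kk.val < s then j ⟨kk.val, lt_trans h hsr⟩ else c')
        (s := Finset.univ) (t := E) ?_ ?_
      · rwa [Finset.card_univ, Fintype.card_fin] at h
      · intro kk _
        by_cases hkk : kk.val < s
        · simp only [dif_pos hkk]
          refine Finset.mem_filter.2 ⟨hjD' _ hkk, ?_⟩
          exact (hjc ⟨kk.val, lt_trans hkk hsr⟩).2 hkk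
        · simp only [dif_neg hkk]
          exact Finset.mem_filter.2 ⟨hc'D, hc'le⟩
      · intro kk _ kk' _ heq
        by_cases h1 : kk.val < s <;> by_cases h2 : kk'.val < s
        · simp only [dif_pos h1, dif_pos h2] at heq
          have h3 := hmono.injective heq
          exact Fin.ext (Fin.mk_eq_mk.1 h3)
        · simp only [dif_pos h1, dif_neg h2] at heq
          exact absurd heq.symm (hc'img _)
        · simp only [dif_neg h1, dif_pos h2] at heq
          exact absurd heq (hc'img _)
        · apply Fin.ext
          omega
    have hcard2 : E.card ≤ s := by
      have hsubE : E ⊆ Finset.image j'' (Finset.Iio ⟨s, hsr⟩) := by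
        intro d hd
        obtain ⟨hdD, hdc⟩ := Finset.mem_filter.1 hd
        have : d ∈ Set.range j'' := by rw [hrange]; exact Finset.mem_coe.2 hdD
        obtain ⟨k, rfl⟩ := this
        have hk : k < (⟨s, hsr⟩ : Fin r) := by
          by_contra hkk
          exact absurd (le_trans (hj''mono.monotone (le_of_not_gt hkk)) hdc) (not_le.2 hb)
        exact Finset.mem_image_of_mem _ (Finset.mem_Iio.2 hk)
      calc E.card ≤ (Finset.image j'' (Finset.Iio ⟨s, hsr⟩)).card := Finset.card_le_card hsubE
        _ ≤ (Finset.Iio (⟨s, hsr⟩ : Fin r)).card := Finset.card_image_le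
        _ = s := by rw [Fin.card_Iio]
    omega
  set Tf := Finset.univ.filter (fun i : Fin r => j i ≠ j'' i) with hTf
  have hsT : (⟨s, hsr⟩ : Fin r) ∈ Tf := by
    simp only [hTf, Finset.mem_filter, Finset.mem_univ, true_and]
    intro h
    have h2 : j ⟨s, hsr⟩ ≤ c := h ▸ hbeta
    have := (hjc _).1 h2
    simp at this
  have hTne : Tf.Nonempty := ⟨_, hsT⟩
  set i₀ := Tf.min' hTne with hi₀
  have hi₀T : i₀ ∈ Tf := Tf.min'_mem hTne
  have hi₀ne : j i₀ ≠ j'' i₀ := by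
    have := Finset.mem_filter.1 hi₀T
    exact this.2
  have hagree : ∀ k, k < i₀ → j k = j'' k := by
    intro k hk
    by_contra hne
    exact absurd (Tf.min'_le k (by simp [hTf, hne])) (not_le.2 hk)
  have hlt0 : j i₀ < j'' i₀ := lt_of_le_of_ne (hL i₀ hagree) hi₀ne
  have hi₀s : i₀ ≤ (⟨s, hsr⟩ : Fin r) := Tf.min'_le _ hsT
  rcases eq_or_lt_of_le hi₀s with heq | hlt
  · rw [heq] at hlt0
    have hjsc : j ⟨s, hsr⟩ ≤ c := le_trans hlt0.le hbeta
    have := (hjc _).1 hjsc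
    simp at this
  · have hi₀v : i₀.val < s := hlt
    have hmemD : j i₀ ∈ D := hjD' i₀ hi₀v
    have : j i₀ ∈ Set.range j'' := by rw [hrange]; exact Finset.mem_coe.2 hmemD
    obtain ⟨k, hk⟩ := this
    rcases lt_or_ge k i₀ with hki | hik
    · have h1 : j k = j i₀ := (hagree k hki).trans hk
      have : k = i₀ := hmono.injective h1
      rw [this] at hki
      exact absurd hki (lt_irrefl _)
    · have : j'' i₀ ≤ j i₀ := hk ▸ hj''mono.monotone hik
      exact absurd hlt0 (not_lt.2 this)


section Transfer

variable {K : Type*} [Field K]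

lemma phi_inj : Function.Injective (algebraMap (Polynomial K) (RatFunc K)) :=
  IsFractionRing.injective _ _

lemma denom_clear {ι : Type*} [Finite ι] (u : ι → RatFunc K) :
    ∃ (b : Polynomial K) (p : ι → Polynomial K), b ≠ 0 ∧
      ∀ i, algebraMap (Polynomial K) (RatFunc K) (p i)
        = algebraMap (Polynomial K) (RatFunc K) b * u i := by
  obtain ⟨b, hb⟩ := IsLocalization.exist_integer_multiples_of_finite
    (nonZeroDivisors (Polynomial K)) u
  choose p hp using hb
  refine ⟨(b : Polynomial K), p, nonZeroDivisors.coe_ne_zero b, fun i => ?_⟩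
  rw [hp i, Algebra.smul_def]

lemma vecMul_map {m : ℕ} {κ : Type*} [Fintype κ] (M : Matrix (Fin m) κ (Polynomial K))
    (p : Fin m → Polynomial K) :
    (fun i => algebraMap (Polynomial K) (RatFunc K) (p i))
        ᵥ* (M.map (algebraMap (Polynomial K) (RatFunc K)))
      = fun j => algebraMap (Polynomial K) (RatFunc K) ((p ᵥ* M) j) := by
  funext j
  exact (RingHom.map_vecMul _ M p j).symm

end Transfer


section KB
variable {K : Type*} [Field K]

lemma mul_sub_right {a b : ℕ} {ι : Type*} {R : Type*} [CommRing R] [Fintype ι]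
    (C : Matrix (Fin a) (Fin b) R) {N : Type*} [Fintype N]
    (M : Matrix (Fin b) N R) (e : ι → N) :
    C * (M.submatrix id e) = (C * M).submatrix id e := by
  ext i k
  simp [Matrix.mul_apply]

lemma kb_transfer {ℓ m n₁ : ℕ} (Kb : Matrix (Fin ℓ) (Fin m) (Polynomial K))
    (F₁ : Matrix (Fin m) (Fin n₁) (Polynomial K)) (h : IsKernelBasis Kb F₁) :
    (Kb.map (algebraMap (Polynomial K) (RatFunc K)))
        * (F₁.map (algebraMap (Polynomial K) (RatFunc K))) = 0
    ∧ (∀ u : Fin ℓ → RatFunc K,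
        u ᵥ* Kb.map (algebraMap (Polynomial K) (RatFunc K)) = 0 → u = 0)
    ∧ ∀ p : Fin m → RatFunc K,
        p ᵥ* F₁.map (algebraMap (Polynomial K) (RatFunc K)) = 0 →
        ∃ u, p = u ᵥ* Kb.map (algebraMap (Polynomial K) (RatFunc K)) := by
  obtain ⟨hker, hind, hspan⟩ := h
  set φ := algebraMap (Polynomial K) (RatFunc K) with hφ
  have hrow0 : ∀ p : Fin ℓ → Polynomial K, p ᵥ* Kb = 0 → p = 0 := by
    intro p hp
    rw [vecMul_eq_sum'] at hp
    have := Fintype.linearIndependent_iff.1 hind p hp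
    funext i
    exact this i
  refine ⟨?_, ?_, ?_⟩
  · rw [← Matrix.map_mul]
    have : Kb * F₁ = 0 := by
      apply Matrix.ext
      intro i j
      have := congrFun (hker i) j
      simpa [Matrix.mul_apply, Matrix.vecMul, dotProduct] using this
    rw [this]
    ext i j
    simp
  · intro u hu
    obtain ⟨b, p, hb, hp⟩ := denom_clear u
    have hpK : p ᵥ* Kb = 0 := by
      apply _root_.funext
      intro j
      apply phi_inj
      have h1 : φ ((p ᵥ* Kb) j) = ((fun i => φ (p i)) ᵥ* Kb.map φ) j := by
        rw [vecMul_map]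
      rw [h1]
      have h2 : (fun i => φ (p i)) = fun i => φ b * u i := by
        funext i; exact hp i
      rw [h2]
      have h3 : (fun i => φ b * u i) ᵥ* Kb.map φ = fun j' => φ b * ((u ᵥ* Kb.map φ) j') := by
        funext j'
        simp [Matrix.vecMul, dotProduct, Finset.mul_sum, mul_assoc]
      rw [h3, hu]
      simp
    have hp0 := hrow0 p hpK
    funext i
    have := hp i
    rw [hp0] at this
    simp only [Pi.zero_apply, map_zero] at this
    have hbne : φ b ≠ 0 := fun hh => hb (phi_inj (by rw [hh, map_zero]))
    rcases mul_eq_zero.1 this.symm with h | h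
    · exact absurd h hbne
    · exact h
  · intro p hp
    obtain ⟨b, q, hb, hq⟩ := denom_clear p
    have hbne : φ b ≠ 0 := fun hh => hb (phi_inj (by rw [hh, map_zero]))
    have hqF : q ᵥ* F₁ = 0 := by
      apply _root_.funext
      intro j
      apply phi_inj
      have h1 : φ ((q ᵥ* F₁) j) = ((fun i => φ (q i)) ᵥ* F₁.map φ) j := by
        rw [vecMul_map]
      rw [h1]
      have h2 : (fun i => φ (q i)) = fun i => φ b * p i := by
        funext i; exact hq i
      rw [h2]
      have h3 : (fun i => φ b * p i) ᵥ* F₁.map φ = fun j' => φ b * ((p ᵥ* F₁.map φ) j') := by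
        funext j'
        simp [Matrix.vecMul, dotProduct, Finset.mul_sum, mul_assoc]
      rw [h3, hp]
      simp
    obtain ⟨u₀, hu₀⟩ := hspan q hqF
    refine ⟨fun i => (φ b)⁻¹ * φ (u₀ i), ?_⟩
    funext j
    have h4 : ((fun i => (φ b)⁻¹ * φ (u₀ i)) ᵥ* Kb.map φ) j
        = (φ b)⁻¹ * (((fun i => φ (u₀ i)) ᵥ* Kb.map φ) j) := by
      simp [Matrix.vecMul, dotProduct, Finset.mul_sum, mul_assoc]
    rw [h4, vecMul_map]
    rw [← hu₀]
    show p j = (φ b)⁻¹ * φ (q j)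
    rw [hq j, ← mul_assoc, inv_mul_cancel₀ hbne, one_mul]
end KB

end CRPaux

/-- The column rank profile of `F = [F₁ | F₂]` is the concatenation of the column rank
profile of `F₁` and the (shifted) column rank profile of `F' = K₁·F₂`. -/
theorem stmt15 {K : Type*} [Field K] {m n₁ n₂ ℓ₁ r₁ r₂ : ℕ}
    (F : Matrix (Fin m) (Fin (n₁ + n₂)) K[X])
    (K₁ : Matrix (Fin ℓ₁) (Fin m) K[X])
    (hK₁ : IsKernelBasis K₁ (F.submatrix id (Fin.castAdd n₂)))
    (j₁ : Fin r₁ → Fin n₁)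
    (hj₁ : IsColRankProfile (F.submatrix id (Fin.castAdd n₂)) j₁)
    (j₂ : Fin r₂ → Fin n₂)
    (hj₂ : IsColRankProfile (K₁ * F.submatrix id (Fin.natAdd n₁)) j₂) :
    IsColRankProfile F
      (Fin.append (fun a => Fin.castAdd n₂ (j₁ a)) (fun a => Fin.natAdd n₁ (j₂ a))) := by
  classical
  set φ := algebraMap (Polynomial K) (RatFunc K) with hφ
  set A := F.map φ with hA
  set C := K₁.map φ with hCd
  obtain ⟨hCA0, hinj, hspan⟩ := CRPaux.kb_transfer K₁ (F.submatrix id (Fin.castAdd n₂)) hK₁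
  have hmapsub : (F.submatrix id (Fin.castAdd n₂)).map ⇑φ = A.submatrix id (Fin.castAdd n₂) := rfl
  rw [hmapsub] at hCA0 hspan
  set G₁ := A.submatrix id (Fin.castAdd n₂) with hG₁
  set A' := (K₁ * F.submatrix id (Fin.natAdd n₁)).map ⇑φ with hA'
  have hA'eq : A' = C * A.submatrix id (Fin.natAdd n₁) := by
    rw [hA', Matrix.map_mul]
    rfl
  -- transferred rank facts
  have hmono1 : StrictMono j₁ := hj₁.1
  have hmono2 : StrictMono j₂ := hj₂.1
  have hr1 : G₁.rank = r₁ := hj₁.2.1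
  have hsub1 : (G₁.submatrix id j₁).rank = r₁ := hj₁.2.2.1
  have hlex1 : ∀ j'' : Fin r₁ → Fin n₁, StrictMono j'' → (G₁.submatrix id j'').rank = r₁ →
      lexLE j₁ j'' := fun j'' h1 h2 => hj₁.2.2.2 j'' h1 h2
  have hr2 : A'.rank = r₂ := hj₂.2.1
  have hsub2 : (A'.submatrix id j₂).rank = r₂ := hj₂.2.2.1
  have hlex2 : ∀ j'' : Fin r₂ → Fin n₂, StrictMono j'' → (A'.submatrix id j'').rank = r₂ →
      lexLE j₂ j'' := fun j'' h1 h2 => hj₂.2.2.2 j'' h1 h2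
  have hpre1 := CRPaux.crp_prefix_le G₁ j₁ hmono1 hr1 hsub1 hlex1
  have hpre2 := CRPaux.crp_prefix_le A' j₂ hmono2 hr2 hsub2 hlex2
  set jj : Fin (r₁ + r₂) → Fin (n₁ + n₂) :=
    Fin.append (fun a => Fin.castAdd n₂ (j₁ a)) (fun a => Fin.natAdd n₁ (j₂ a)) with hjj
  have hsplitFin : ∀ (q1 q2 : ℕ) (k : Fin (q1 + q2)),
      (∃ a : Fin q1, k = Fin.castAdd q2 a) ∨ (∃ a : Fin q2, k = Fin.natAdd q1 a) := by
    intro q1 q2 k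
    by_cases h : k.val < q1
    · exact Or.inl ⟨⟨k.val, h⟩, Fin.ext rfl⟩
    · refine Or.inr ⟨⟨k.val - q1, by have := k.isLt; omega⟩, Fin.ext ?_⟩
      show k.val = q1 + (k.val - q1)
      omega
  have hjjmono : StrictMono jj := by
    intro k k' hkk
    rcases hsplitFin r₁ r₂ k with ⟨a, rfl⟩ | ⟨a, rfl⟩ <;>
      rcases hsplitFin r₁ r₂ k' with ⟨a', rfl⟩ | ⟨a', rfl⟩
    · rw [hjj, Fin.append_left, Fin.append_left]
      have h1 : a < a' := by
        rw [Fin.lt_def] at hkk ⊢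
        simpa using hkk
      have h2 := hmono1 h1
      rw [Fin.lt_def] at h2 ⊢
      simpa using h2
    · rw [hjj, Fin.append_left, Fin.append_right]
      rw [Fin.lt_def]
      have := (j₁ a).isLt
      simp only [Fin.coe_castAdd, Fin.coe_natAdd]
      omega
    · exfalso
      rw [Fin.lt_def] at hkk
      simp only [Fin.coe_castAdd, Fin.coe_natAdd] at hkk
      have := a'.isLt
      omega
    · rw [hjj, Fin.append_right, Fin.append_right]
      have h1 : a < a' := by
        rw [Fin.lt_def] at hkk ⊢
        simp only [Fin.coe_natAdd] at hkk
        omega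
      have h2 := hmono2 h1
      rw [Fin.lt_def] at h2 ⊢
      simp only [Fin.coe_natAdd]
      omega
  -- rank of the whole matrix
  have hrangeU : Set.range (Sum.elim (Fin.castAdd n₂) (Fin.natAdd n₁) :
      Fin n₁ ⊕ Fin n₂ → Fin (n₁ + n₂)) = Set.range (id : Fin (n₁ + n₂) → Fin (n₁ + n₂)) := by
    apply Set.ext
    intro x
    constructor
    · intro _
      exact ⟨x, rfl⟩
    · intro _
      rcases hsplitFin n₁ n₂ x with ⟨a, rfl⟩ | ⟨a, rfl⟩
      · exact ⟨Sum.inl a, rfl⟩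
      · exact ⟨Sum.inr a, rfl⟩
  have hpairfull := CRPaux.rank_pair A (Fin.castAdd n₂) (Fin.natAdd n₁) C hCA0 hinj hspan
  have hrA : A.rank = r₁ + r₂ := by
    have e1 : (A.submatrix id (id : Fin (n₁+n₂) → Fin (n₁+n₂))).rank
        = (A.submatrix id (Sum.elim (Fin.castAdd n₂) (Fin.natAdd n₁))).rank :=
      CRPaux.rank_sub_congr A hrangeU.symm
    rw [Matrix.submatrix_id_id] at e1
    rw [e1, hpairfull, hr1, ← hA'eq, hr2]
  -- rank of the selected columns
  have hsubjj : (A.submatrix id jj).rank = r₁ + r₂ := by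
    have h := CRPaux.rank_eq_card_of_ker (A.submatrix id jj) ?_
    · rwa [Fintype.card_fin] at h
    intro v hv
    set v₁ : Fin r₁ → RatFunc K := fun a => v (Fin.castAdd r₂ a) with hv₁
    set v₂ : Fin r₂ → RatFunc K := fun a => v (Fin.natAdd r₁ a) with hv₂
    set X₁ := A.submatrix id (fun a => Fin.castAdd n₂ (j₁ a)) with hX₁
    set X₂ := A.submatrix id (fun a => Fin.natAdd n₁ (j₂ a)) with hX₂
    have hsum : X₁ *ᵥ v₁ + X₂ *ᵥ v₂ = 0 := by
      funext i0
      have h := congrFun hv i0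
      have h0 : ((A.submatrix id jj) *ᵥ v) i0 = ∑ k, A i0 (jj k) * v k := by
        simp [Matrix.mulVec, dotProduct]
      rw [h0, Fin.sum_univ_add] at h
      have hl : ∀ a : Fin r₁, A i0 (jj (Fin.castAdd r₂ a)) * v (Fin.castAdd r₂ a)
          = A i0 (Fin.castAdd n₂ (j₁ a)) * v₁ a := by
        intro a
        rw [hjj, Fin.append_left]
      have hr : ∀ a : Fin r₂, A i0 (jj (Fin.natAdd r₁ a)) * v (Fin.natAdd r₁ a)
          = A i0 (Fin.natAdd n₁ (j₂ a)) * v₂ a := by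
        intro a
        rw [hjj, Fin.append_right]
      rw [Finset.sum_congr rfl (fun a _ => hl a), Finset.sum_congr rfl (fun a _ => hr a)] at h
      have : (X₁ *ᵥ v₁) i0 + (X₂ *ᵥ v₂) i0
          = ∑ a : Fin r₁, A i0 (Fin.castAdd n₂ (j₁ a)) * v₁ a
            + ∑ a : Fin r₂, A i0 (Fin.natAdd n₁ (j₂ a)) * v₂ a := by
        simp [hX₁, hX₂, Matrix.mulVec, dotProduct]
      rw [Pi.add_apply, this, h]
    have hCX₁ : C * X₁ = 0 := by
      have e : X₁ = G₁.submatrix id j₁ := rfl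
      rw [e, CRPaux.mul_sub_right, hCA0]
      ext i k
      simp
    have hCX₂ : C * X₂ = A'.submatrix id j₂ := by
      have e : X₂ = (A.submatrix id (Fin.natAdd n₁)).submatrix id j₂ := rfl
      rw [e, CRPaux.mul_sub_right, ← hA'eq]
    have happ : C *ᵥ (X₁ *ᵥ v₁) + C *ᵥ (X₂ *ᵥ v₂) = 0 := by
      rw [← Matrix.mulVec_add, hsum, Matrix.mulVec_zero]
    rw [Matrix.mulVec_mulVec, Matrix.mulVec_mulVec, hCX₁, hCX₂] at happ
    have hz1 : (0 : Matrix (Fin ℓ₁) (Fin r₁) (RatFunc K)) *ᵥ v₁ = 0 := Matrix.zero_mulVec v₁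
    rw [hz1, zero_add] at happ
    have hv₂0 : v₂ = 0 := by
      apply CRPaux.mulVec_ker_triv (A'.submatrix id j₂) _ v₂ happ
      rw [hsub2, Fintype.card_fin]
    have hv₁0 : v₁ = 0 := by
      rw [hv₂0, Matrix.mulVec_zero, add_zero] at hsum
      apply CRPaux.mulVec_ker_triv X₁ _ v₁ hsum
      have e : X₁ = G₁.submatrix id j₁ := rfl
      rw [e, hsub1, Fintype.card_fin]
    funext k
    rcases hsplitFin r₁ r₂ k with ⟨a, rfl⟩ | ⟨a, rfl⟩
    · exact congrFun hv₁0 a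
    · exact congrFun hv₂0 a
  -- key prefix bound
  have hkey : ∀ c : Fin (n₁ + n₂),
      (A.submatrix id (fun d : {d : Fin (n₁ + n₂) // d ≤ c} => d.1)).rank
        ≤ (Finset.univ.filter (fun k => jj k ≤ c)).card := by
    intro c
    by_cases hc : c.val < n₁
    · set c₁ : Fin n₁ := ⟨c.val, hc⟩ with hc₁
      have hrangeeq : Set.range (fun d : {d : Fin (n₁ + n₂) // d ≤ c} => d.1)
          = Set.range (fun d : {d : Fin n₁ // d ≤ c₁} => Fin.castAdd n₂ d.1) := by
        apply Set.ext
        intro x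
        constructor
        · rintro ⟨⟨x, hxc⟩, rfl⟩
          have hx1 : x.val < n₁ := by
            rw [Fin.le_def] at hxc
            omega
          refine ⟨⟨⟨x.val, hx1⟩, ?_⟩, Fin.ext rfl⟩
          rw [Fin.le_def] at hxc ⊢
          exact hxc
        · rintro ⟨⟨d, hd⟩, rfl⟩
          refine ⟨⟨Fin.castAdd n₂ d, ?_⟩, rfl⟩
          rw [Fin.le_def] at hd ⊢
          exact hd
      have hrk : (A.submatrix id (fun d : {d : Fin (n₁ + n₂) // d ≤ c} => d.1)).rank
          = (G₁.submatrix id (fun d : {d : Fin n₁ // d ≤ c₁} => d.1)).rank := by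
        rw [CRPaux.rank_sub_congr A hrangeeq]
        rfl
      have hcnt : (Finset.univ.filter (fun k => jj k ≤ c)).card
          = (Finset.univ.filter (fun k => j₁ k ≤ c₁)).card := by
        rw [Finset.card_filter, Finset.card_filter, Fin.sum_univ_add]
        have h1 : ∀ a : Fin r₁, (if jj (Fin.castAdd r₂ a) ≤ c then (1:ℕ) else 0)
            = (if j₁ a ≤ c₁ then 1 else 0) := by
          intro a
          have hiff : (jj (Fin.castAdd r₂ a) ≤ c) ↔ (j₁ a ≤ c₁) := by
            rw [hjj, Fin.append_left, Fin.le_def, Fin.le_def]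
            exact Iff.rfl
          simp only [hiff]
        have h2 : ∀ a : Fin r₂, (if jj (Fin.natAdd r₁ a) ≤ c then (1:ℕ) else 0) = 0 := by
          intro a
          rw [hjj, Fin.append_right, if_neg]
          rw [Fin.le_def]
          simp only [Fin.coe_natAdd]
          omega
        rw [Finset.sum_congr rfl (fun a _ => h1 a), Finset.sum_congr rfl (fun a _ => h2 a)]
        simp
      rw [hrk, hcnt]
      exact hpre1 c₁
    · push_neg at hc
      set c₂ : Fin n₂ := ⟨c.val - n₁, by have := c.isLt; omega⟩ with hc₂
      have hrangeeq : Set.range (fun d : {d : Fin (n₁ + n₂) // d ≤ c} => d.1)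
          = Set.range (Sum.elim (Fin.castAdd n₂)
              (fun d : {d : Fin n₂ // d ≤ c₂} => Fin.natAdd n₁ d.1)) := by
        apply Set.ext
        intro x
        constructor
        · rintro ⟨⟨x, hxc⟩, rfl⟩
          rw [Fin.le_def] at hxc
          by_cases hx1 : x.val < n₁
          · exact ⟨Sum.inl ⟨x.val, hx1⟩, Fin.ext rfl⟩
          · push_neg at hx1
            refine ⟨Sum.inr ⟨⟨x.val - n₁, by have := x.isLt; omega⟩, ?_⟩, Fin.ext ?_⟩
            · rw [Fin.le_def]
              show x.val - n₁ ≤ c.val - n₁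
              omega
            · show n₁ + (x.val - n₁) = x.val
              omega
        · rintro ⟨y, rfl⟩
          cases y with
          | inl a =>
            refine ⟨⟨Fin.castAdd n₂ a, ?_⟩, rfl⟩
            rw [Fin.le_def]
            have := a.isLt
            simp only [Fin.coe_castAdd]
            omega
          | inr d =>
            refine ⟨⟨Fin.natAdd n₁ d.1, ?_⟩, rfl⟩
            rw [Fin.le_def]
            have hd := d.2
            rw [Fin.le_def] at hd
            simp only [Fin.coe_natAdd]
            have hle : d.1.val ≤ c.val - n₁ := hd
            omega
      have hpair2 := CRPaux.rank_pair A (Fin.castAdd n₂)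
        (fun d : {d : Fin n₂ // d ≤ c₂} => Fin.natAdd n₁ d.1) C hCA0 hinj hspan
      have hCsub : C * A.submatrix id (fun d : {d : Fin n₂ // d ≤ c₂} => Fin.natAdd n₁ d.1)
          = A'.submatrix id (fun d : {d : Fin n₂ // d ≤ c₂} => d.1) := by
        have e : A.submatrix id (fun d : {d : Fin n₂ // d ≤ c₂} => Fin.natAdd n₁ d.1)
            = (A.submatrix id (Fin.natAdd n₁)).submatrix id
                (fun d : {d : Fin n₂ // d ≤ c₂} => d.1) := rfl
        rw [e, CRPaux.mul_sub_right, ← hA'eq]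
      have hrk : (A.submatrix id (fun d : {d : Fin (n₁ + n₂) // d ≤ c} => d.1)).rank
          = r₁ + (A'.submatrix id (fun d : {d : Fin n₂ // d ≤ c₂} => d.1)).rank := by
        rw [CRPaux.rank_sub_congr A hrangeeq, hpair2, hr1, hCsub]
      have hcnt : (Finset.univ.filter (fun k => jj k ≤ c)).card
          = r₁ + (Finset.univ.filter (fun k => j₂ k ≤ c₂)).card := by
        rw [Finset.card_filter, Finset.card_filter, Fin.sum_univ_add]
        have h1 : ∀ a : Fin r₁, (if jj (Fin.castAdd r₂ a) ≤ c then (1:ℕ) else 0) = 1 := by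
          intro a
          rw [hjj, Fin.append_left, if_pos]
          rw [Fin.le_def]
          have := (j₁ a).isLt
          simp only [Fin.coe_castAdd]
          omega
        have h2 : ∀ a : Fin r₂, (if jj (Fin.natAdd r₁ a) ≤ c then (1:ℕ) else 0)
            = (if j₂ a ≤ c₂ then 1 else 0) := by
          intro a
          have hiff : (jj (Fin.natAdd r₁ a) ≤ c) ↔ (j₂ a ≤ c₂) := by
            rw [hjj, Fin.append_right, Fin.le_def, Fin.le_def]
            simp only [Fin.coe_natAdd]
            constructor
            · intro h
              show (j₂ a).val ≤ c.val - n₁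
              omega
            · intro h
              have : (j₂ a).val ≤ c.val - n₁ := h
              omega
          simp only [hiff]
        rw [Finset.sum_congr rfl (fun a _ => h1 a), Finset.sum_congr rfl (fun a _ => h2 a)]
        simp
      rw [hrk, hcnt]
      exact Nat.add_le_add_left (hpre2 c₂) r₁
  -- assemble
  refine ⟨hjjmono, hrA, hsubjj, ?_⟩
  intro j' hmono' hrank'
  have hsubrank' : (A.submatrix id j').rank = r₁ + r₂ := hrank'
  have hpoint : ∀ i : Fin (r₁ + r₂), jj i ≤ j' i := by
    intro i
    have hi1 : i.val + 1 ≤ r₁ + r₂ := i.isLt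
    set e : Fin (i.val + 1) → Fin (r₁ + r₂) := Fin.castLE hi1 with he
    have heinj : Function.Injective e := Fin.castLE_injective hi1
    have hefull : ((A.submatrix id j').submatrix id e).rank = i.val + 1 := by
      have h := CRPaux.rank_comp_of_full (A.submatrix id j')
        (by rw [hsubrank', Fintype.card_fin]) e heinj
      rwa [Fintype.card_fin] at h
    have hee : (A.submatrix id j').submatrix id e = A.submatrix id (fun k => j' (e k)) := rfl
    rw [hee] at hefull
    have hstep2 : (A.submatrix id (fun k => j' (e k))).rank
        ≤ (A.submatrix id (fun d : {d : Fin (n₁ + n₂) // d ≤ j' i} => d.1)).rank := by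
      apply CRPaux.rank_sub_mono
      rintro _ ⟨k, rfl⟩
      refine ⟨⟨j' (e k), ?_⟩, rfl⟩
      apply hmono'.monotone
      rw [Fin.le_def]
      show k.val ≤ i.val
      have := k.isLt
      omega
    have h3 : i.val + 1 ≤ (Finset.univ.filter (fun k => jj k ≤ j' i)).card := by
      have := hkey (j' i)
      omega
    exact (CRPaux.strictMono_filter_le hjjmono (j' i) i).2 (by omega)
  intro i _
  exact hpoint i


end
end

section
/- Let K be a field, let F ∈ K[x]^{m×n} have rank r and factor as F = S·R with S ∈ K[x]^{m×r} and R ∈ K[x]^{r×n}. Let s ∈ ℤ^m and let Kb ∈ K[x]^{(m−r)×m} be an s-weak Popov basis of Ker(F), with s-pivot index set π and complement π^c. Set S₁ = S[π^c,:] ∈ K[x]^{r×r} and S₂ = S[π,:] ∈ K[x]^{(m−r)×r}. Then S₁ is nonsingular and the column submatrix Kb[:,π] ∈ K[x]^{(m−r)×(m−r)} is an s_π-weak Popov basis of the relation module Rel_{S₁}(S₂) = {p ∈ K[x]^{1×(m−r)} : p·S₂ = q·S₁ for some q}, where s_π is the subtuple of s with indices in π. -/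
open Polynomial Matrix

noncomputable section

variable {K : Type*} [Field K]

/-- The strictly increasing enumeration of the complement of a finset `J ⊆ Fin m`
having `Jᶜ.card = r`. -/
def complEnum {m r : ℕ} (J : Finset (Fin m)) (h : Jᶜ.card = r) : Fin r → Fin m :=
  fun a => ((Jᶜ.orderIsoOfFin h) a : Fin m)

/-! ### Auxiliary lemmas -/

section AuxLemmas

lemma aux_pdegZ_eq_bot {p : K[X]} : pdegZ p = ⊥ ↔ p = 0 := by
  rw [pdegZ, WithBot.map_eq_bot_iff, degree_eq_bot]

lemma aux_pdegZ_le_iff {p q : K[X]} : pdegZ p ≤ pdegZ q ↔ p.degree ≤ q.degree :=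
  WithBot.map_le_iff _ (fun {a b} => Nat.cast_le)

lemma aux_pdegZ_lt_iff {p q : K[X]} : pdegZ p < pdegZ q ↔ p.degree < q.degree := by
  simp only [lt_iff_le_not_ge, aux_pdegZ_le_iff]

lemma aux_pdegZ_mul {p q : K[X]} : pdegZ (p * q) = pdegZ p + pdegZ q := by
  unfold pdegZ
  rw [degree_mul]
  rcases eq_or_ne p 0 with rfl | hp
  · simp
  rcases eq_or_ne q 0 with rfl | hq
  · simp
  rw [degree_eq_natDegree hp, degree_eq_natDegree hq, ← Nat.cast_add, Nat.cast_withBot,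
    Nat.cast_withBot, Nat.cast_withBot, WithBot.map_coe, WithBot.map_coe, WithBot.map_coe,
    ← WithBot.coe_add]
  push_cast
  rfl

lemma aux_le_sdeg {n : ℕ} (s : Fin n → ℤ) (p : Fin n → K[X]) (j : Fin n) :
    pdegZ (p j) + (s j : WithBot ℤ) ≤ sdeg s p :=
  Finset.le_sup (f := fun j => pdegZ (p j) + (s j : WithBot ℤ)) (Finset.mem_univ j)

lemma aux_sdeg_ne_bot {n : ℕ} {s : Fin n → ℤ} {p : Fin n → K[X]} (hp : p ≠ 0) :
    sdeg s p ≠ ⊥ := by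
  obtain ⟨j, hj⟩ := Function.ne_iff.mp hp
  intro h
  have h1 := aux_le_sdeg s p j
  rw [h, le_bot_iff, WithBot.add_eq_bot] at h1
  rcases h1 with h1 | h1
  · exact hj (aux_pdegZ_eq_bot.mp h1)
  · exact WithBot.coe_ne_bot h1

lemma aux_pivot_entry_ne_zero {n : ℕ} {s : Fin n → ℤ} {p : Fin n → K[X]} {j : Fin n}
    (hp : p ≠ 0) (h : IsPivotIndex s p j) : p j ≠ 0 := by
  intro h0
  apply aux_sdeg_ne_bot hp (s := s)
  rw [← h.1, h0]
  simp [pdegZ]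

lemma aux_vecMul_apply {α : Type*} [NonUnitalNonAssocSemiring α] {ℓ m : ℕ}
    (u : Fin ℓ → α) (P : Matrix (Fin ℓ) (Fin m) α) (j : Fin m) :
    (u ᵥ* P) j = ∑ i, u i * P i j := by
  simp [Matrix.vecMul, dotProduct]

lemma aux_vecMul_eq_sum {α : Type*} [NonUnitalNonAssocSemiring α] {ℓ m : ℕ}
    (u : Fin ℓ → α) (P : Matrix (Fin ℓ) (Fin m) α) :
    u ᵥ* P = ∑ i, u i • P i := by
  funext j
  rw [aux_vecMul_apply, Finset.sum_apply]
  simp [smul_eq_mul]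

/-- Key lemma: a nonzero combination of rows with strictly increasing pivots is
nonzero at some pivot position. -/
lemma aux_key {ℓ m : ℕ} {s : Fin m → ℤ} {P : Matrix (Fin ℓ) (Fin m) K[X]}
    (hnz : ∀ i, P i ≠ 0) {piv : Fin ℓ → Fin m} (hmono : StrictMono piv)
    (hpiv : ∀ i, IsPivotIndex s (P i) (piv i))
    {u : Fin ℓ → K[X]} (hu : u ≠ 0) : ∃ i, (u ᵥ* P) (piv i) ≠ 0 := by
  classical
  obtain ⟨i0, hi0⟩ := Function.ne_iff.mp hu
  have hEnon : (Finset.univ : Finset (Fin ℓ)).Nonempty := ⟨i0, Finset.mem_univ i0⟩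
  set d : Fin ℓ → WithBot ℤ := fun i => pdegZ (u i) + sdeg s (P i) with hd
  set D : WithBot ℤ := Finset.univ.sup d with hD
  have hDbot : D ≠ ⊥ := by
    intro h
    have h1 : d i0 ≤ D := Finset.le_sup (Finset.mem_univ i0)
    rw [h, le_bot_iff] at h1
    have h2 : pdegZ (u i0) = ⊥ ∨ sdeg s (P i0) = ⊥ := WithBot.add_eq_bot.mp h1
    rcases h2 with h1 | h1
    · exact hi0 (aux_pdegZ_eq_bot.mp h1)
    · exact aux_sdeg_ne_bot (hnz i0) h1
  have hTne : (Finset.univ.filter (fun i => d i = D)).Nonempty := by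
    obtain ⟨i1, _, h1⟩ := Finset.exists_mem_eq_sup Finset.univ hEnon d
    exact ⟨i1, Finset.mem_filter.mpr ⟨Finset.mem_univ i1, h1.symm⟩⟩
  set imax := (Finset.univ.filter (fun i => d i = D)).max' hTne with himax
  have hdimax : d imax = D :=
    (Finset.mem_filter.mp ((Finset.univ.filter (fun i => d i = D)).max'_mem hTne)).2
  have huimax : u imax ≠ 0 := by
    intro h
    apply hDbot
    rw [← hdimax]
    show pdegZ (u imax) + sdeg s (P imax) = ⊥
    rw [h]
    simp [pdegZ]
  set j := piv imax with hj
  have hPj : P imax j ≠ 0 := aux_pivot_entry_ne_zero (hnz imax) (hpiv imax)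
  have hM0 : u imax * P imax j ≠ 0 := mul_ne_zero huimax hPj
  have hM0deg : pdegZ (u imax * P imax j) + (s j : WithBot ℤ) = D := by
    rw [aux_pdegZ_mul, add_assoc, (hpiv imax).1]
    exact hdimax
  -- every other term has strictly smaller degree
  have hsmall : ∀ i ∈ Finset.univ.erase imax,
      (u i * P i j).degree < (u imax * P imax j).degree := by
    intro i hi
    have hine : i ≠ imax := (Finset.mem_erase.mp hi).1
    rw [← aux_pdegZ_lt_iff]
    rcases eq_or_ne (u i) 0 with h0 | h0
    · rw [h0, zero_mul]
      have hb : pdegZ (0 : K[X]) = ⊥ := aux_pdegZ_eq_bot.mpr rfl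
      rw [hb]
      exact Ne.bot_lt (fun h => hM0 (aux_pdegZ_eq_bot.mp h))
    · have hkey : pdegZ (u i * P i j) + (s j : WithBot ℤ) < D := by
        have hle : d i ≤ D := Finset.le_sup (Finset.mem_univ i)
        rcases hle.lt_or_eq with hlt | heq
        · calc pdegZ (u i * P i j) + (s j : WithBot ℤ)
              = pdegZ (u i) + (pdegZ (P i j) + (s j : WithBot ℤ)) := by
                rw [aux_pdegZ_mul, add_assoc]
            _ ≤ pdegZ (u i) + sdeg s (P i) := add_le_add le_rfl (aux_le_sdeg s (P i) j)
            _ = d i := rfl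
            _ < D := hlt
        · have himem : i ∈ Finset.univ.filter (fun i => d i = D) :=
            Finset.mem_filter.mpr ⟨Finset.mem_univ i, heq⟩
          have hilt : i < imax :=
            lt_of_le_of_ne (Finset.le_max' _ i himem) hine
          have hstrict : pdegZ (P i j) + (s j : WithBot ℤ) < sdeg s (P i) :=
            lt_of_le_of_ne (aux_le_sdeg s (P i) j) ((hpiv i).2 j (hmono hilt))
          calc pdegZ (u i * P i j) + (s j : WithBot ℤ)
              = pdegZ (u i) + (pdegZ (P i j) + (s j : WithBot ℤ)) := by
                rw [aux_pdegZ_mul, add_assoc]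
            _ < pdegZ (u i) + sdeg s (P i) :=
                WithBot.add_lt_add_left (fun h => h0 (aux_pdegZ_eq_bot.mp h)) hstrict
            _ = d i := rfl
            _ = D := heq
      rw [← hM0deg] at hkey
      exact (WithBot.add_lt_add_iff_right (WithBot.coe_ne_bot)).mp hkey
  refine ⟨imax, ?_⟩
  have hexp : (u ᵥ* P) j = u imax * P imax j + ∑ i ∈ Finset.univ.erase imax, u i * P i j := by
    rw [aux_vecMul_apply, ← Finset.add_sum_erase _ _ (Finset.mem_univ imax)]
  have hrest : (∑ i ∈ Finset.univ.erase imax, u i * P i j).degree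
      < (u imax * P imax j).degree := by
    refine lt_of_le_of_lt (Polynomial.degree_sum_le _ _) ?_
    rw [Finset.sup_lt_iff (Ne.bot_lt (fun h => hM0 (degree_eq_bot.mp h)))]
    exact hsmall
  intro h0
  have := Polynomial.degree_add_eq_left_of_degree_lt hrest
  rw [← hexp, h0] at this
  exact hM0 (degree_eq_bot.mp this.symm)

lemma aux_sum_split {M : Type*} [AddCommMonoid M] {m r ℓ : ℕ} {piv : Fin ℓ → Fin m}
    (hinj : Function.Injective piv) {J : Finset (Fin m)} (hJ : J = Finset.univ.image piv)
    (hcard : Jᶜ.card = r) (f : Fin m → M) :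
    ∑ j, f j = (∑ a, f (piv a)) + ∑ b, f (complEnum J hcard b) := by
  classical
  subst hJ
  rw [← Finset.sum_add_sum_compl (Finset.univ.image piv) f]
  congr 1
  · rw [Finset.sum_image (fun x _ y _ h => hinj h)]
  · rw [← Finset.sum_coe_sort ((Finset.univ.image piv)ᶜ) f]
    exact (Fintype.sum_equiv ((Finset.univ.image piv)ᶜ.orderIsoOfFin hcard).toEquiv
      (fun b => f (complEnum (Finset.univ.image piv) hcard b)) (fun x => f ↑x)
      (fun b => rfl)).symm

end AuxLemmas

set_option maxHeartbeats 1000000 in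
set_option synthInstance.maxHeartbeats 200000 in
/-- The pivot columns of a weak Popov kernel basis form a weak Popov relation basis. -/
theorem stmt16 {K : Type*} [Field K] {m n r : ℕ}
    (F : Matrix (Fin m) (Fin n) K[X]) (hF : polyRank F = r)
    (S : Matrix (Fin m) (Fin r) K[X]) (R : Matrix (Fin r) (Fin n) K[X]) (hSR : F = S * R)
    (s : Fin m → ℤ)
    (Kb : Matrix (Fin (m - r)) (Fin m) K[X]) (hkb : IsKernelBasis Kb F)
    (piv : Fin (m - r) → Fin m) (hmono : StrictMono piv)
    (hnz : ∀ i, Kb i ≠ 0) (hpiv : ∀ i, IsPivotIndex s (Kb i) (piv i))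
    (hcard : ((Finset.univ.image piv)ᶜ).card = r) :
    (S.submatrix (complEnum (Finset.univ.image piv) hcard) id).det ≠ 0 ∧
    IsWeakPopov (s ∘ piv) (Kb.submatrix id piv) ∧
    IsRelationBasis (S.submatrix (complEnum (Finset.univ.image piv) hcard) id)
      (Kb.submatrix id piv) (S.submatrix piv id) := by
  classical
  have hinj := hmono.injective
  set J := Finset.univ.image piv with hJdef
  set c := complEnum J hcard with hcdef
  have hJcard : J.card = m - r := by
    rw [hJdef, Finset.card_image_of_injective _ hinj, Finset.card_univ, Fintype.card_fin]
  have hcmem : ∀ b, c b ∈ Jᶜ := fun b => (Jᶜ.orderIsoOfFin hcard b).2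
  have hpivmem : ∀ a, piv a ∈ J := fun a => Finset.mem_image_of_mem piv (Finset.mem_univ a)
  have hpiv_eq : ∀ a, piv a = ((J.orderIsoOfFin hJcard) a : Fin m) := by
    intro a
    rw [funext_iff.mp (Finset.orderEmbOfFin_unique hJcard hpivmem hmono) a]
    exact (Finset.coe_orderIsoOfFin_apply _ _ _).symm
  have hpivnz : ∀ i, Kb i (piv i) ≠ 0 := fun i => aux_pivot_entry_ne_zero (hnz i) (hpiv i)
  have key : ∀ u : Fin (m - r) → K[X], u ≠ 0 → ∃ i, (u ᵥ* Kb) (piv i) ≠ 0 :=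
    fun u hu => aux_key hnz hmono hpiv hu
  obtain ⟨hker, hli, hgen⟩ := hkb
  -- R has full row rank over the fraction field
  set φ := algebraMap K[X] (RatFunc K) with hφ
  have hφinj : Function.Injective φ := IsFractionRing.injective K[X] (RatFunc K)
  have hRrank : (R.map φ).rank = r := by
    apply le_antisymm
    · simpa using (R.map φ).rank_le_card_height
    · have h1 : polyRank F ≤ (R.map φ).rank := by
        rw [polyRank, hSR]
        rw [show (S * R).map φ = S.map φ * R.map φ from Matrix.map_mul]
        exact Matrix.rank_mul_le_right _ _
      rwa [hF] at h1
  have hRli : LinearIndependent (RatFunc K) (fun i : Fin r => (R.map φ) i) := by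
    rw [linearIndependent_iff_card_eq_finrank_span]
    rw [Set.finrank]
    have hrk := Matrix.rank_eq_finrank_span_row (R.map φ)
    rw [hRrank] at hrk
    rw [Fintype.card_fin]
    exact hrk
  have hcancelR : ∀ v : Fin r → K[X], v ᵥ* R = 0 → v = 0 := by
    intro v hv
    have hmap0 : (fun i => φ (v i)) ᵥ* (R.map φ) = 0 := by
      funext jj
      rw [aux_vecMul_apply]
      simp only [Pi.zero_apply]
      have hvj : (v ᵥ* R) jj = 0 := congrFun hv jj
      rw [aux_vecMul_apply] at hvj
      calc ∑ i, φ (v i) * (R.map φ) i jj = φ (∑ i, v i * R i jj) := by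
            rw [map_sum]
            exact Finset.sum_congr rfl fun i _ => (map_mul φ _ _).symm
        _ = 0 := by rw [hvj, map_zero]
    rw [aux_vecMul_eq_sum] at hmap0
    have h0 := Fintype.linearIndependent_iff.mp hRli (fun i => φ (v i)) hmap0
    funext b
    exact hφinj (by simpa using h0 b)
  have hKbS : ∀ i, Kb i ᵥ* S = 0 := by
    intro i
    apply hcancelR
    rw [Matrix.vecMul_vecMul, ← hSR]
    exact hker i
  -- Part 2 : weak Popov form of the pivot submatrix
  have hsub_row : ∀ i, (Kb.submatrix id piv) i = fun a => Kb i (piv a) := fun i => rfl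
  have hsdeg_sub : ∀ i, sdeg (s ∘ piv) ((Kb.submatrix id piv) i) = sdeg s (Kb i) := by
    intro i
    apply le_antisymm
    · apply Finset.sup_le
      intro a _
      exact aux_le_sdeg s (Kb i) (piv a)
    · rw [← (hpiv i).1]
      exact Finset.le_sup (f := fun a => pdegZ ((Kb.submatrix id piv) i a)
        + ((s ∘ piv) a : WithBot ℤ)) (Finset.mem_univ i)
  have part2 : IsWeakPopov (s ∘ piv) (Kb.submatrix id piv) := by
    constructor
    · intro i h
      exact hpivnz i (congrFun h i)
    · refine ⟨id, strictMono_id, fun i => ?_⟩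
      constructor
      · rw [hsdeg_sub i]
        exact (hpiv i).1
      · intro j' hij' heq
        rw [hsdeg_sub i] at heq
        exact (hpiv i).2 (piv j') (hmono hij') heq
  -- Part 1 : nonsingularity of S₁
  have part1 : (S.submatrix c id).det ≠ 0 := by
    intro hdet
    obtain ⟨v, hv0, hv⟩ := Matrix.exists_vecMul_eq_zero_iff.mpr hdet
    set w : Fin m → K[X] :=
      fun j => if h : j ∈ Jᶜ then v ((Jᶜ.orderIsoOfFin hcard).symm ⟨j, h⟩) else 0 with hw
    have hwc : ∀ b, w (c b) = v b := by
      intro b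
      have hmem : c b ∈ Jᶜ := hcmem b
      show (if h : c b ∈ Jᶜ then v ((Jᶜ.orderIsoOfFin hcard).symm ⟨c b, h⟩) else 0) = v b
      rw [dif_pos hmem]
      congr 1
      have : (⟨c b, hmem⟩ : {x // x ∈ Jᶜ}) = (Jᶜ.orderIsoOfFin hcard) b := Subtype.ext rfl
      rw [this, OrderIso.symm_apply_apply]
    have hwp : ∀ a, w (piv a) = 0 := by
      intro a
      show (if h : piv a ∈ Jᶜ then v ((Jᶜ.orderIsoOfFin hcard).symm ⟨piv a, h⟩) else 0) = 0
      rw [dif_neg (by simpa [Finset.mem_compl] using hpivmem a)]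
    have hwS : w ᵥ* S = 0 := by
      funext k
      rw [aux_vecMul_apply]
      rw [show (0 : Fin r → K[X]) k = 0 from rfl]
      rw [aux_sum_split hinj hJdef hcard (fun j => w j * S j k)]
      simp only [hwp, zero_mul, Finset.sum_const_zero, zero_add]
      have hfin : ∑ b, w (c b) * S (c b) k = (v ᵥ* (S.submatrix c id)) k := by
        rw [aux_vecMul_apply]
        exact Finset.sum_congr rfl fun b _ => by rw [hwc b]; rfl
      rw [← hcdef]
      rw [hfin, hv]
      rfl
    have hwF : w ᵥ* F = 0 := by
      rw [hSR, ← Matrix.vecMul_vecMul, hwS, Matrix.zero_vecMul]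
    obtain ⟨u, hu⟩ := hgen w hwF
    have hune : u ≠ 0 := by
      intro h
      rw [h, Matrix.zero_vecMul] at hu
      obtain ⟨b, hb⟩ := Function.ne_iff.mp hv0
      exact hb (by rw [← hwc b, hu]; rfl)
    obtain ⟨i, hi⟩ := key u hune
    apply hi
    rw [← hu]
    exact hwp i
  refine ⟨part1, part2, ?_, ?_, ?_⟩
  -- Relation basis : membership
  · intro i
    refine ⟨fun b => -(Kb i (c b)), ?_⟩
    funext k
    have h0 := congrFun (hKbS i) k
    rw [aux_vecMul_apply] at h0
    rw [show (0 : Fin r → K[X]) k = 0 from rfl] at h0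
    rw [aux_sum_split hinj hJdef hcard (fun j => Kb i j * S j k), ← hcdef] at h0
    rw [aux_vecMul_apply, aux_vecMul_apply]
    have hA : ∑ a, (Kb.submatrix id piv) i a * (S.submatrix piv id) a k
        = ∑ a, Kb i (piv a) * S (piv a) k := rfl
    have hB : ∑ b, -Kb i (c b) * (S.submatrix c id) b k
        = -∑ b, Kb i (c b) * S (c b) k := by
      rw [← Finset.sum_neg_distrib]
      exact Finset.sum_congr rfl fun b _ => by rw [neg_mul]; rfl
    rw [hA, hB]
    linear_combination h0
  -- Relation basis : linear independence
  · rw [Fintype.linearIndependent_iff]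
    intro g hg i
    by_contra hgi
    have hgne : g ≠ 0 := fun h => hgi (congrFun h i)
    obtain ⟨i', hi'⟩ := key g hgne
    apply hi'
    have hz : g ᵥ* (Kb.submatrix id piv) = 0 := by
      rw [aux_vecMul_eq_sum]
      exact hg
    have := congrFun hz i'
    rw [aux_vecMul_apply] at this
    rw [aux_vecMul_apply]
    exact this
  -- Relation basis : generation
  · rintro p ⟨q, hpq⟩
    set w : Fin m → K[X] := fun j =>
      if h : j ∈ J then p ((J.orderIsoOfFin hJcard).symm ⟨j, h⟩)
      else -q ((Jᶜ.orderIsoOfFin hcard).symm ⟨j, Finset.mem_compl.mpr h⟩) with hw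
    have hwp : ∀ a, w (piv a) = p a := by
      intro a
      have hmem : piv a ∈ J := hpivmem a
      show (if h : piv a ∈ J then p ((J.orderIsoOfFin hJcard).symm ⟨piv a, h⟩)
        else -q ((Jᶜ.orderIsoOfFin hcard).symm ⟨piv a, Finset.mem_compl.mpr h⟩)) = p a
      rw [dif_pos hmem]
      congr 1
      have : (⟨piv a, hmem⟩ : {x // x ∈ J}) = (J.orderIsoOfFin hJcard) a :=
        Subtype.ext (hpiv_eq a)
      rw [this, OrderIso.symm_apply_apply]
    have hwc : ∀ b, w (c b) = -q b := by
      intro b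
      have hnmem : c b ∉ J := Finset.mem_compl.mp (hcmem b)
      show (if h : c b ∈ J then p ((J.orderIsoOfFin hJcard).symm ⟨c b, h⟩)
        else -q ((Jᶜ.orderIsoOfFin hcard).symm ⟨c b, Finset.mem_compl.mpr h⟩)) = -q b
      rw [dif_neg hnmem]
      congr 1
      have : (⟨c b, Finset.mem_compl.mpr hnmem⟩ : {x // x ∈ Jᶜ})
          = (Jᶜ.orderIsoOfFin hcard) b := Subtype.ext rfl
      rw [this, OrderIso.symm_apply_apply]
    have hwS : w ᵥ* S = 0 := by
      funext k
      rw [aux_vecMul_apply]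
      rw [show (0 : Fin r → K[X]) k = 0 from rfl]
      rw [aux_sum_split hinj hJdef hcard (fun j => w j * S j k), ← hcdef]
      have hpqk := congrFun hpq k
      rw [aux_vecMul_apply, aux_vecMul_apply] at hpqk
      have hA : ∑ a, w (piv a) * S (piv a) k
          = ∑ a, p a * (S.submatrix piv id) a k := by
        exact Finset.sum_congr rfl fun a _ => by rw [hwp a]; rfl
      have hB : ∑ b, w (c b) * S (c b) k
          = -∑ b, q b * (S.submatrix c id) b k := by
        rw [← Finset.sum_neg_distrib]
        exact Finset.sum_congr rfl fun b _ => by rw [hwc b, neg_mul]; rfl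
      rw [hA, hB, hpqk]
      ring
    have hwF : w ᵥ* F = 0 := by
      rw [hSR, ← Matrix.vecMul_vecMul, hwS, Matrix.zero_vecMul]
    obtain ⟨u, hu⟩ := hgen w hwF
    refine ⟨u, funext fun a => ?_⟩
    have h1 : (u ᵥ* Kb.submatrix id piv) a = (u ᵥ* Kb) (piv a) := by
      rw [aux_vecMul_apply, aux_vecMul_apply]
      rfl
    rw [h1, ← hu]
    exact (hwp a).symm

end
end

section
/- Let K be a field and let F₁ ∈ K[x]^{r×n} have full row rank r and factor as F₁ = S₁·R with S₁ ∈ K[x]^{r×r} and R ∈ K[x]^{r×n}. Then deg(det(S₁)) ≤ Σ rdeg(F₁), the sum of the row degrees of F₁. -/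
open Polynomial Matrix

noncomputable section

variable {K : Type*} [Field K]

/-- Auxiliary: a full row rank matrix has `r` columns whose square submatrix has
nonzero determinant (over the fraction field). -/
lemma exists_cols_det_ne_zero {L : Type*} [Field L] {r n : ℕ}
    (A : Matrix (Fin r) (Fin n) L) (h : A.rank = r) :
    ∃ j : Fin r → Fin n, (A.submatrix id j).det ≠ 0 := by
  classical
  have htrk : Aᵀ.rank = r := by rw [Matrix.rank_transpose]; exact h
  have hspan : Submodule.span L (Set.range (fun j : Fin n => Aᵀ j)) = ⊤ := by
    apply Submodule.eq_top_of_finrank_eq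
    have := Matrix.rank_eq_finrank_span_row Aᵀ
    rw [htrk] at this
    rw [Module.finrank_fintype_fun_eq_card, Fintype.card_fin]; exact this.symm
  obtain ⟨b, hbsub, hbspan, hbli⟩ :=
    exists_linearIndependent L (Set.range (fun j : Fin n => Aᵀ j))
  rw [hspan] at hbspan
  -- b is a basis of (Fin r → L)
  let bas : Module.Basis b L (Fin r → L) := Module.Basis.mk hbli (by rw [Subtype.range_coe, hbspan])
  have hfin : FiniteDimensional L (Fin r → L) := by infer_instance
  have : Fintype b := FiniteDimensional.fintypeBasisIndex bas
  have hcard : Fintype.card b = r := by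
    have := Module.finrank_eq_card_basis bas
    rw [Module.finrank_fintype_fun_eq_card, Fintype.card_fin] at this
    exact this.symm
  obtain e : Fin r ≃ b := (Fintype.equivFinOfCardEq hcard).symm
  -- choose column indices
  have hchoice : ∀ x : b, ∃ jx : Fin n, Aᵀ jx = (x : Fin r → L) := fun x => hbsub x.2
  choose g hg using hchoice
  refine ⟨fun k => g (e k), ?_⟩
  intro hdet
  obtain ⟨v, hv, hmv⟩ := (Matrix.exists_mulVec_eq_zero_iff).mpr hdet
  -- columns of the submatrix are linearly independent
  have hli : LinearIndependent L (fun k : Fin r => (e k : Fin r → L)) :=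
    hbli.comp e e.injective
  have hsum : ∑ k : Fin r, v k • (e k : Fin r → L) = 0 := by
    funext i
    have h1 : ∑ x : Fin r, A i (g (e x)) * v x = 0 := by
      have := congrFun hmv i
      simp only [Matrix.mulVec, dotProduct, Matrix.submatrix_apply, id,
        Pi.zero_apply] at this
      exact this
    simp only [Finset.sum_apply, Pi.smul_apply, Pi.zero_apply, smul_eq_mul]
    rw [← h1]
    refine Finset.sum_congr rfl fun k _ => ?_
    rw [← hg (e k), Matrix.transpose_apply, mul_comm]
  have := Fintype.linearIndependent_iff.mp hli v hsum
  exact hv (funext this)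

/-- Auxiliary: degree of a determinant is at most the sum of row degree bounds. -/
lemma degree_det_le_sum {r : ℕ} (M : Matrix (Fin r) (Fin r) K[X])
    (d : Fin r → WithBot ℕ) (hd : ∀ i k, (M i k).degree ≤ d i) :
    M.det.degree ≤ ∑ i, d i := by
  rw [Matrix.det_apply']
  refine le_trans (Polynomial.degree_sum_le Finset.univ _) ?_
  refine Finset.sup_le fun σ _ => ?_
  refine (Polynomial.degree_mul_le _ _).trans ?_
  have h1 : ((Equiv.Perm.sign σ : ℤ) : K[X]).degree ≤ 0 := Polynomial.degree_intCast_le _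
  have h2 : (∏ i, M (σ i) i).degree ≤ ∑ i, d i := by
    refine (Polynomial.degree_prod_le _ _).trans ?_
    calc ∑ i, (M (σ i) i).degree ≤ ∑ i, d (σ i) :=
          Finset.sum_le_sum fun i _ => hd (σ i) i
      _ = ∑ i, d i := Equiv.sum_comp σ d
  calc _ ≤ 0 + ∑ i, d i := add_le_add h1 h2
    _ = ∑ i, d i := zero_add _

/-- Determinantal degree bound from a factorization of a full row rank matrix. -/
theorem stmt17 {K : Type*} [Field K] {r n : ℕ}
    (F₁ : Matrix (Fin r) (Fin n) K[X]) (hrk : polyRank F₁ = r)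
    (S₁ : Matrix (Fin r) (Fin r) K[X]) (R : Matrix (Fin r) (Fin n) K[X])
    (hfac : F₁ = S₁ * R) :
    pdegZ S₁.det ≤ ∑ i, sdeg (0 : Fin n → ℤ) (F₁ i) := by
  classical
  set φ := algebraMap K[X] (RatFunc K)
  obtain ⟨j, hdet⟩ := exists_cols_det_ne_zero (F₁.map φ) hrk
  have hsub : (F₁.submatrix id j).map φ = (F₁.map φ).submatrix id j := by
    ext i k; rfl
  have hmapdet : ((F₁.submatrix id j).map φ).det = φ ((F₁.submatrix id j).det) := by
    rw [← RingHom.mapMatrix_apply, ← RingHom.map_det]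
  have hdet₁ : (F₁.submatrix id j).det ≠ 0 := by
    intro h0
    apply hdet
    rw [← hsub, hmapdet, h0, map_zero]
  have hfacsub : F₁.submatrix id j = S₁ * (R.submatrix id j) := by
    ext i k
    simp [hfac, Matrix.mul_apply, Matrix.submatrix_apply]
  have hdetfac : (F₁.submatrix id j).det = S₁.det * (R.submatrix id j).det := by
    rw [hfacsub, Matrix.det_mul]
  have hR : (R.submatrix id j).det ≠ 0 := by
    intro h0; apply hdet₁; rw [hdetfac, h0, mul_zero]
  -- degree comparison over WithBot ℕ
  set d : Fin r → WithBot ℕ := fun i => Finset.univ.sup fun c => (F₁ i c).degree with hd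
  have hdeg1 : S₁.det.degree ≤ (F₁.submatrix id j).det.degree := by
    rw [hdetfac, Polynomial.degree_mul]
    exact le_add_of_nonneg_right (Polynomial.zero_le_degree_iff.mpr hR)
  have hdeg2 : (F₁.submatrix id j).det.degree ≤ ∑ i, d i :=
    degree_det_le_sum _ d fun i k => by
      show (F₁ i (j k)).degree ≤ d i
      exact Finset.le_sup (f := fun c => (F₁ i c).degree) (Finset.mem_univ (j k))
  have hdeg : S₁.det.degree ≤ ∑ i, d i := hdeg1.trans hdeg2
  -- transfer to WithBot ℤ
  let ψ : WithBot ℕ →+ WithBot ℤ := (Nat.castRingHom ℤ).toAddMonoidHom.withBotMap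
  have hmono : Monotone (WithBot.map (Nat.cast : ℕ → ℤ)) :=
    Monotone.withBot_map fun a b hab => by exact_mod_cast hab
  have key : pdegZ S₁.det ≤ WithBot.map (Nat.cast : ℕ → ℤ) (∑ i, d i) := hmono hdeg
  have hψ : WithBot.map (Nat.cast : ℕ → ℤ) (∑ i, d i) = ∑ i, WithBot.map Nat.cast (d i) := by
    have := map_sum ψ d Finset.univ
    exact this
  have hsd : ∀ i, WithBot.map (Nat.cast : ℕ → ℤ) (d i) = sdeg (0 : Fin n → ℤ) (F₁ i) := by
    intro i
    rw [hd]
    rw [Finset.comp_sup_eq_sup_comp (WithBot.map (Nat.cast : ℕ → ℤ))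
      (fun x y => hmono.map_sup x y) (WithBot.map_bot _)]
    unfold sdeg
    apply Finset.sup_congr rfl
    intro c _
    simp [pdegZ, Function.comp]
  exact key.trans_eq (hψ.trans (Finset.sum_congr rfl fun i _ => hsd i))

end
end
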